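/- Non-degeneracy of the asymptotic variance for the Van Valen MCV (Lemma 2, variant VV): Under the stated assumptions with Σ ≠ 0 and with no coordinate of X_1 conditionally two-point distributed, the asymptotic variance σ²_{C^VV} = (1/4)·(C^VV)⁻²·A_VV(μ, Σ)·Σ_X̃·A_VV(μ, Σ)ᵀ is strictly positive: σ²_{C^VV} > 0. -/

import Mathlib

open MeasureTheory ProbabilityTheory Filter Matrix Topology BigOperators

noncomputable section

/-- The matrix `D̃(x) ∈ ℝ^{d²×d}`; the row index `(a, r)` plays the role of the
linear index `(a−1)d + r`. -/
def Dtilde {d : ℕ} (x : Fin d → ℝ) : Matrix (Fin d × Fin d) (Fin d) ℝ :=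
  fun p s =>
    (if s = p.1 ∧ p.1 ≠ p.2 then -(x p.2) else 0)
      + (if s = p.2 ∧ p.2 = p.1 then -(2 * x s) else 0)
      + (if p.2 = s ∧ s ≠ p.1 then -(x p.1) else 0)

/-- The vectorization `vec(I_d)` of the identity matrix. -/
def vecId (d : ℕ) : Fin d × Fin d → ℝ := fun p => if p.2 = p.1 then 1 else 0

/-- The row vector `A_VV(m, S) ∈ ℝ^{1×(d+d²)}`. -/
def Avv {d : ℕ} (m : Fin d → ℝ) (S : Matrix (Fin d) (Fin d) ℝ) :
    (Fin d ⊕ Fin d × Fin d) → ℝ :=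
  Sum.elim
    (fun s => -2 * S.trace * m s / (m ⬝ᵥ m) ^ 2
      + (m ⬝ᵥ m)⁻¹ * Matrix.vecMul (vecId d) (Dtilde m) s)
    (fun p => (m ⬝ᵥ m)⁻¹ * vecId d p)

/-- The Van Valen multivariate coefficient of variation `C^VV = sqrt(tr S/(mᵀm))`. -/
def CVVof {d : ℕ} (m : Fin d → ℝ) (S : Matrix (Fin d) (Fin d) ℝ) : ℝ :=
  Real.sqrt (S.trace / (m ⬝ᵥ m))

/-- The asymptotic variance `σ²_{C^VV} = (1/4)(C^VV)⁻² A_VV(μ,Σ) Σ_X̃ A_VV(μ,Σ)ᵀ`. -/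
def sigma2VV {d : ℕ} (m : Fin d → ℝ) (S : Matrix (Fin d) (Fin d) ℝ)
    (Ψ3 : Matrix (Fin d × Fin d) (Fin d) ℝ)
    (Ψ4 : Matrix (Fin d × Fin d) (Fin d × Fin d) ℝ) : ℝ :=
  (1 / 4) * ((CVVof m S) ^ 2)⁻¹
    * (Avv m S ⬝ᵥ (Matrix.fromBlocks S Ψ3ᵀ Ψ3 Ψ4).mulVec (Avv m S))


/-! ### Auxiliary lemmas -/

lemma prob_eq_one_of_ae {Ω : Type} [MeasurableSpace Ω] (P : Measure Ω)
    [IsProbabilityMeasure P] {s : Set Ω} (h : ∀ᵐ ω ∂P, ω ∈ s) : P s = 1 := by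
  have h1 : P {ω | ω ∉ s} = 0 := by simpa [ae_iff] using h
  have h2 : (1 : ENNReal) = P Set.univ := measure_univ.symm
  have h3 : P Set.univ ≤ P {ω | ω ∉ s} + P s := by
    refine le_trans (measure_mono ?_) (measure_union_le _ _)
    intro ω _; by_cases hω : ω ∈ s <;> simp [hω]
  have h4 := prob_le_one (μ := P) (s := s)
  rw [h1, zero_add] at h3
  exact le_antisymm h4 (h2 ▸ h3)

lemma abs_listprod_le {d : ℕ} (x : Fin d → ℝ) :
    ∀ l : List (Fin d), |(l.map x).prod| ≤ ‖x‖ ^ l.length := by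
  intro l; induction l with
  | nil => simp
  | cons a t ih =>
      simp only [List.map_cons, List.prod_cons, List.length_cons, abs_mul, pow_succ]
      rw [mul_comm (‖x‖ ^ t.length) ‖x‖]
      have ha : |x a| ≤ ‖x‖ := by simpa [Real.norm_eq_abs] using norm_le_pi_norm x a
      exact mul_le_mul ha ih (abs_nonneg _) (norm_nonneg _)

lemma pow_le_one_add_pow4 (t : ℝ) (ht : 0 ≤ t) {k : ℕ} (hk : k ≤ 4) : t ^ k ≤ 1 + t ^ 4 := by
  rcases le_total t 1 with h | h
  · have := pow_le_one₀ ht h (n := k); nlinarith [pow_nonneg ht 4]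
  · have := pow_le_pow_right₀ h hk; nlinarith [pow_nonneg ht k]

lemma measurable_listprod {d : ℕ} (l : List (Fin d)) :
    Measurable (fun x : Fin d → ℝ => (l.map x).prod) := by
  induction l with
  | nil => simpa using measurable_const
  | cons a t ih =>
    simp only [List.map_cons, List.prod_cons]
    exact (measurable_pi_apply a).mul ih

lemma integrable_listprod {d : ℕ} {Ω : Type} [MeasurableSpace Ω] (P : Measure Ω)
    [IsProbabilityMeasure P] (X : Ω → Fin d → ℝ) (hmeas : Measurable X)
    (hmom : Integrable (fun ω => ‖X ω‖ ^ 4) P) (l : List (Fin d)) (hl : l.length ≤ 4) :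
    Integrable (fun ω => ((l.map (X ω)).prod)) P := by
  refine Integrable.mono' ((integrable_const 1).add hmom)
    (((measurable_listprod l).comp hmeas).aestronglyMeasurable)
    (ae_of_all _ fun ω => ?_)
  have h1 := abs_listprod_le (X ω) l
  have h2 := pow_le_one_add_pow4 (‖X ω‖) (norm_nonneg _) hl
  simpa [Real.norm_eq_abs] using h1.trans h2

/-- The list of coordinates of the auxiliary vector `V(x) = (x, vec(x xᵀ))`. -/
def Vli {d : ℕ} : Fin d ⊕ Fin d × Fin d → List (Fin d) :=
  Sum.elim (fun s => [s]) (fun p => [p.1, p.2])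

/-- The auxiliary vector `V(x) = (x, vec(x xᵀ))`. -/
def Vf {d : ℕ} (x : Fin d → ℝ) (i : Fin d ⊕ Fin d × Fin d) : ℝ := ((Vli i).map x).prod

lemma Vli_length_le {d : ℕ} (i : Fin d ⊕ Fin d × Fin d) : (Vli i).length ≤ 2 := by
  rcases i with s | p <;> simp [Vli]

lemma quadform_eq_var {ι : Type*} [Fintype ι] [DecidableEq ι] {Ω : Type} [MeasurableSpace Ω]
    (P : Measure Ω) [IsProbabilityMeasure P] (A : ι → ℝ) (W : Ω → ι → ℝ)
    (M : Matrix ι ι ℝ)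
    (hint1 : ∀ i, Integrable (fun ω => W ω i) P)
    (hint2 : ∀ i j, Integrable (fun ω => W ω i * W ω j) P)
    (hM : ∀ i j, M i j = (∫ ω, W ω i * W ω j ∂P) - (∫ ω, W ω i ∂P) * (∫ ω, W ω j ∂P)) :
    A ⬝ᵥ M.mulVec A
      = (∫ ω, (∑ i, A i * W ω i) ^ 2 ∂P) - (∫ ω, ∑ i, A i * W ω i ∂P) ^ 2 := by
  have hsq : ∀ ω, (∑ i, A i * W ω i) ^ 2 = ∑ i, ∑ j, A i * A j * (W ω i * W ω j) := by
    intro ω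
    rw [sq, Finset.sum_mul_sum]
    exact Finset.sum_congr rfl fun i _ => Finset.sum_congr rfl fun j _ => by ring
  have h1 : (∫ ω, (∑ i, A i * W ω i) ^ 2 ∂P)
      = ∑ i, ∑ j, A i * A j * ∫ ω, W ω i * W ω j ∂P := by
    simp_rw [hsq]
    rw [integral_finset_sum _ fun i _ => integrable_finset_sum _
      fun j _ => (hint2 i j).const_mul _]
    refine Finset.sum_congr rfl fun i _ => ?_
    rw [integral_finset_sum _ fun j _ => (hint2 i j).const_mul _]
    exact Finset.sum_congr rfl fun j _ => integral_const_mul _ _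
  have h2 : (∫ ω, ∑ i, A i * W ω i ∂P) = ∑ i, A i * ∫ ω, W ω i ∂P := by
    rw [integral_finset_sum _ fun i _ => (hint1 i).const_mul _]
    exact Finset.sum_congr rfl fun i _ => integral_const_mul _ _
  rw [h1, h2, dotProduct, sq, Finset.sum_mul_sum, ← Finset.sum_sub_distrib]
  refine Finset.sum_congr rfl fun i _ => ?_
  simp only [Matrix.mulVec, dotProduct]
  rw [Finset.mul_sum]
  calc ∑ j, A i * (M i j * A j)
      = ∑ j, (A i * A j * (∫ ω, W ω i * W ω j ∂P)
          - (A i * ∫ ω, W ω i ∂P) * (A j * ∫ ω, W ω j ∂P)) :=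
        Finset.sum_congr rfl fun j _ => by rw [hM i j]; ring
    _ = _ := Finset.sum_sub_distrib _ _

lemma var_pos_of_not_ae_const {Ω : Type} [MeasurableSpace Ω] (P : Measure Ω)
    [IsProbabilityMeasure P] (Y : Ω → ℝ) (hY : Integrable Y P)
    (hY2 : Integrable (fun ω => Y ω ^ 2) P)
    (hne : ¬ (∀ᵐ ω ∂P, Y ω = ∫ ω', Y ω' ∂P)) :
    0 < (∫ ω, Y ω ^ 2 ∂P) - (∫ ω, Y ω ∂P) ^ 2 := by
  set c := ∫ ω', Y ω' ∂P with hc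
  have hfun : (fun ω => (Y ω - c) ^ 2) = fun ω => Y ω ^ 2 - (2 * c) * Y ω + c ^ 2 :=
    funext fun ω => by ring
  have hint : Integrable (fun ω => (Y ω - c) ^ 2) P := by
    rw [hfun]; exact (hY2.sub (hY.const_mul (2 * c))).add (integrable_const _)
  have hi1 : Integrable (fun ω => Y ω ^ 2 - 2 * c * Y ω) P := hY2.sub (hY.const_mul (2 * c))
  have hi2 : Integrable (fun ω => 2 * c * Y ω) P := hY.const_mul (2 * c)
  have heq : ∫ ω, (Y ω - c) ^ 2 ∂P = (∫ ω, Y ω ^ 2 ∂P) - c ^ 2 := by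
    rw [hfun, integral_add hi1 (integrable_const _), integral_sub hY2 hi2,
      integral_const_mul, integral_const]
    simp [← hc]; ring
  have hge : 0 ≤ ∫ ω, (Y ω - c) ^ 2 ∂P := integral_nonneg fun ω => sq_nonneg _
  rcases lt_or_eq_of_le hge with h | h
  · linarith [heq ▸ h]
  · exfalso
    apply hne
    have h0 : (fun ω => (Y ω - c) ^ 2) =ᵐ[P] 0 :=
      (integral_eq_zero_iff_of_nonneg (fun ω => sq_nonneg _) hint).mp h.symm
    filter_upwards [h0] with ω hω
    have h1 : (Y ω - c) ^ 2 = 0 := hω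
    have h2 := pow_eq_zero_iff (n := 2) (by norm_num) |>.mp h1
    linarith [sub_eq_zero.mp h2]

lemma quad_root (α u R c x : ℝ) (hα : α ≠ 0) (h : α * x ^ 2 + u * x + R = c) :
    x = (-u + Real.sqrt (u ^ 2 - 4 * α * (R - c))) / (2 * α)
      ∨ x = (-u - Real.sqrt (u ^ 2 - 4 * α * (R - c))) / (2 * α) := by
  have hsq : (2 * α * x + u) ^ 2 = u ^ 2 - 4 * α * (R - c) := by
    linear_combination (4 * α) * h
  have hs : Real.sqrt (u ^ 2 - 4 * α * (R - c)) = |2 * α * x + u| := by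
    rw [← hsq, Real.sqrt_sq_eq_abs]
  rcases abs_cases (2 * α * x + u) with ⟨h1, _⟩ | ⟨h1, _⟩
  · left; rw [hs, h1]; field_simp; ring
  · right; rw [hs, h1]; field_simp; ring

lemma Avv_dot {d : ℕ} (μ : Fin d → ℝ) (SigM : Matrix (Fin d) (Fin d) ℝ) (x : Fin d → ℝ) :
    ∑ i, Avv μ SigM i * Vf x i
      = ∑ s, Avv μ SigM (Sum.inl s) * x s + (μ ⬝ᵥ μ)⁻¹ * ∑ a, x a ^ 2 := by
  rw [Fintype.sum_sum_type]
  congr 1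
  · exact Finset.sum_congr rfl fun s _ => by simp [Vf, Vli]
  · rw [Fintype.sum_prod_type]
    rw [Finset.mul_sum]
    refine Finset.sum_congr rfl fun a _ => ?_
    simp only [Avv, Sum.elim_inr, vecId, Vf, Vli, List.map_cons, List.map_nil,
      List.prod_cons, List.prod_nil, mul_one, mul_ite, mul_zero, ite_mul, zero_mul]
    rw [Finset.sum_ite_eq' Finset.univ a]
    simp [sq]

lemma sum_decomp {d : ℕ} (m : Fin d) (u : Fin d → ℝ) (α : ℝ) (x : Fin d → ℝ) :
    ∑ s, u s * x s + α * ∑ a, x a ^ 2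
      = α * (x m) ^ 2 + u m * x m
        + (∑ s, u s * (Function.update x m 0 s)
            + α * ∑ a, (Function.update x m 0 a) ^ 2) := by
  classical
  have key : ∀ y : Fin d → ℝ, ∑ s, u s * y s + α * ∑ a, (y a) ^ 2
      = (u m * y m + α * (y m) ^ 2)
        + ((∑ s ∈ Finset.univ.erase m, u s * y s)
            + α * ∑ a ∈ Finset.univ.erase m, (y a) ^ 2) := by
    intro y
    rw [← Finset.add_sum_erase _ (fun s => u s * y s) (Finset.mem_univ m),
      ← Finset.add_sum_erase _ (fun a => (y a) ^ 2) (Finset.mem_univ m)]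
    ring
  rw [key x, key (Function.update x m 0)]
  have e1 : ∑ s ∈ Finset.univ.erase m, u s * (Function.update x m 0 s)
      = ∑ s ∈ Finset.univ.erase m, u s * x s :=
    Finset.sum_congr rfl fun s hs => by
      rw [Function.update_of_ne (Finset.ne_of_mem_erase hs)]
  have e2 : ∑ a ∈ Finset.univ.erase m, (Function.update x m 0 a) ^ 2
      = ∑ a ∈ Finset.univ.erase m, (x a) ^ 2 :=
    Finset.sum_congr rfl fun a ha => by
      rw [Function.update_of_ne (Finset.ne_of_mem_erase ha)]
  rw [e1, e2, Function.update_self]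
  ring

lemma measurable_updZero {d : ℕ} (m : Fin d) :
    Measurable (fun x : Fin d → ℝ => Function.update x m 0) := by
  apply measurable_pi_lambda
  intro j
  by_cases hj : j = m
  · subst hj
    simp only [Function.update_self]
    exact measurable_const
  · simp only [Function.update_of_ne hj]
    exact measurable_pi_apply j

/-- Non-degeneracy of the asymptotic variance for the Van Valen
MCV: if `μ ≠ 0`, `Σ ≠ 0` and no coordinate of `X` is conditionally two-point
distributed, then `σ²_{C^VV} > 0`. -/
theorem sigma2VV_pos
    (d : ℕ) (hd : 1 ≤ d)
    {Ω : Type} [MeasurableSpace Ω] (P : Measure Ω) [IsProbabilityMeasure P]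
    (X : Ω → Fin d → ℝ) (hmeas : Measurable X)
    (hmom : Integrable (fun ω => ‖X ω‖ ^ 4) P)
    (μ : Fin d → ℝ) (hμdef : ∀ a, μ a = ∫ ω, X ω a ∂P) (hμ : μ ≠ 0)
    (SigM : Matrix (Fin d) (Fin d) ℝ)
    (hSig : ∀ a b, SigM a b = (∫ ω, X ω a * X ω b ∂P) - μ a * μ b)
    (hSig0 : SigM ≠ 0)
    (Ψ3 : Matrix (Fin d × Fin d) (Fin d) ℝ)
    (hΨ3 : ∀ a r s, Ψ3 (a, r) s
      = (∫ ω, X ω a * X ω r * X ω s ∂P)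
        - (∫ ω, X ω a * X ω r ∂P) * (∫ ω, X ω s ∂P))
    (Ψ4 : Matrix (Fin d × Fin d) (Fin d × Fin d) ℝ)
    (hΨ4 : ∀ a r b s, Ψ4 (a, r) (b, s)
      = (∫ ω, X ω a * X ω r * X ω b * X ω s ∂P)
        - (∫ ω, X ω a * X ω r ∂P) * (∫ ω, X ω b * X ω s ∂P))
    (htp : ∀ m : Fin d, ¬ ∃ f g : (Fin d → ℝ) → ℝ, Measurable f ∧ Measurable g
      ∧ (∀ x y : Fin d → ℝ, (∀ s, s ≠ m → x s = y s) → f x = f y)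
      ∧ (∀ x y : Fin d → ℝ, (∀ s, s ≠ m → x s = y s) → g x = g y)
      ∧ P {ω | X ω m = f (X ω) ∨ X ω m = g (X ω)} = 1) :
    0 < sigma2VV μ SigM Ψ3 Ψ4 := by
  classical
  set m₀ : Fin d := ⟨0, hd⟩ with hm₀
  -- basic integrability facts
  have hint1 : ∀ i : Fin d ⊕ Fin d × Fin d, Integrable (fun ω => Vf (X ω) i) P := by
    intro i
    exact integrable_listprod P X hmeas hmom (Vli i) ((Vli_length_le i).trans (by norm_num))
  have hint2 : ∀ i j : Fin d ⊕ Fin d × Fin d,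
      Integrable (fun ω => Vf (X ω) i * Vf (X ω) j) P := by
    intro i j
    have hfe : (fun ω => Vf (X ω) i * Vf (X ω) j)
        = fun ω => (((Vli i ++ Vli j).map (X ω)).prod) := by
      funext ω; simp [Vf, List.map_append, List.prod_append]
    rw [hfe]
    refine integrable_listprod P X hmeas hmom _ ?_
    have := Vli_length_le i; have := Vli_length_le j
    simp only [List.length_append]; omega
  have hintl : ∀ l : List (Fin d), l.length ≤ 4 →
      Integrable (fun ω => ((l.map (X ω)).prod)) P :=
    fun l hl => integrable_listprod P X hmeas hmom l hl
  -- the covariance matrix of V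
  have hM : ∀ i j, (Matrix.fromBlocks SigM Ψ3ᵀ Ψ3 Ψ4) i j
      = (∫ ω, Vf (X ω) i * Vf (X ω) j ∂P)
        - (∫ ω, Vf (X ω) i ∂P) * (∫ ω, Vf (X ω) j ∂P) := by
    rintro (a | ⟨a, r⟩) (b | ⟨b, s⟩)
    · simpa [Vf, Vli, hμdef] using hSig a b
    · have hfe : (fun ω => X ω a * (X ω b * X ω s)) = fun ω => X ω b * X ω s * X ω a :=
        funext fun ω => by ring
      simp only [fromBlocks_apply₁₂, transpose_apply, hΨ3, Vf, Vli]
      simp only [Sum.elim_inl, Sum.elim_inr, List.map_cons, List.map_nil, List.prod_cons,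
        List.prod_nil, mul_one]
      rw [hfe]; ring
    · simp only [fromBlocks_apply₂₁, hΨ3, Vf, Vli]
      simp [mul_assoc]
    · have hfe : (fun ω => X ω a * X ω r * (X ω b * X ω s))
          = fun ω => X ω a * X ω r * X ω b * X ω s := funext fun ω => by ring
      simp only [fromBlocks_apply₂₂, hΨ4, Vf, Vli]
      simp only [Sum.elim_inr, List.map_cons, List.map_nil, List.prod_cons, List.prod_nil,
        mul_one]
      rw [hfe]
  -- positivity of μ ⬝ᵥ μ
  have hμμ : 0 < μ ⬝ᵥ μ := by
    obtain ⟨s, hs⟩ := Function.ne_iff.mp hμ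
    rw [dotProduct]
    exact Finset.sum_pos' (fun t _ => mul_self_nonneg _)
      ⟨s, Finset.mem_univ s, mul_self_pos.mpr hs⟩
  have hα : (μ ⬝ᵥ μ)⁻¹ ≠ 0 := inv_ne_zero hμμ.ne'
  -- the random variable Y
  set A : (Fin d ⊕ Fin d × Fin d) → ℝ := Avv μ SigM with hA
  set Y : Ω → ℝ := fun ω => ∑ i, A i * Vf (X ω) i with hY
  have hYint : Integrable Y P := integrable_finset_sum _ fun i _ => (hint1 i).const_mul _
  have hY2int : Integrable (fun ω => Y ω ^ 2) P := by
    have hfe : (fun ω => Y ω ^ 2)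
        = fun ω => ∑ i, ∑ j, A i * A j * (Vf (X ω) i * Vf (X ω) j) := by
      funext ω
      rw [hY, sq, Finset.sum_mul_sum]
      exact Finset.sum_congr rfl fun i _ => Finset.sum_congr rfl fun j _ => by ring
    rw [hfe]
    exact integrable_finset_sum _ fun i _ =>
      integrable_finset_sum _ fun j _ => (hint2 i j).const_mul _
  -- the quadratic form equals the variance of Y
  have hQ : A ⬝ᵥ (Matrix.fromBlocks SigM Ψ3ᵀ Ψ3 Ψ4).mulVec A
      = (∫ ω, Y ω ^ 2 ∂P) - (∫ ω, Y ω ∂P) ^ 2 :=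
    quadform_eq_var P A (fun ω => Vf (X ω)) _ hint1 hint2 hM
  -- auxiliary: the diagonal of SigM
  have hXa : ∀ a : Fin d, Integrable (fun ω => X ω a) P := by
    intro a
    have := hintl [a] (by norm_num)
    simpa using this
  have hXaa : ∀ a : Fin d, Integrable (fun ω => X ω a * X ω a) P := by
    intro a
    have := hintl [a, a] (by norm_num)
    simpa [mul_assoc] using this
  have hdiag : ∀ a : Fin d, SigM a a = ∫ ω, (X ω a - μ a) ^ 2 ∂P := by
    intro a
    have hfe : (fun ω => (X ω a - μ a) ^ 2)
        = fun ω => X ω a * X ω a - (2 * μ a) * X ω a + (μ a) ^ 2 :=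
      funext fun ω => by ring
    have hi1 : Integrable (fun ω => X ω a * X ω a - 2 * μ a * X ω a) P :=
      (hXaa a).sub ((hXa a).const_mul (2 * μ a))
    have hi2 : Integrable (fun ω => 2 * μ a * X ω a) P := (hXa a).const_mul (2 * μ a)
    rw [hSig a a, hfe, integral_add hi1 (integrable_const _), integral_sub (hXaa a) hi2,
      integral_const_mul, integral_const, ← hμdef a]
    simp; ring
  have hdiag_nonneg : ∀ a : Fin d, 0 ≤ SigM a a := fun a => by
    rw [hdiag a]; exact integral_nonneg fun ω => sq_nonneg _
  -- positivity of the trace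
  have htr : 0 < SigM.trace := by
    rw [Matrix.trace]
    refine lt_of_le_of_ne (Finset.sum_nonneg fun a _ => hdiag_nonneg a) fun h0 => ?_
    have hall := (Finset.sum_eq_zero_iff_of_nonneg fun a _ => hdiag_nonneg a).mp h0.symm
    have hm0 : SigM m₀ m₀ = 0 := hall m₀ (Finset.mem_univ m₀)
    rw [hdiag m₀] at hm0
    have hii : Integrable (fun ω => (X ω m₀ - μ m₀) ^ 2) P := by
      have hfe : (fun ω => (X ω m₀ - μ m₀) ^ 2)
          = fun ω => X ω m₀ * X ω m₀ - (2 * μ m₀) * X ω m₀ + (μ m₀) ^ 2 :=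
        funext fun ω => by ring
      rw [hfe]
      exact ((hXaa m₀).sub ((hXa m₀).const_mul (2 * μ m₀))).add (integrable_const _)
    have hae : ∀ᵐ ω ∂P, X ω m₀ = μ m₀ := by
      have h0 := (integral_eq_zero_iff_of_nonneg (fun ω => sq_nonneg _) hii).mp hm0
      filter_upwards [h0] with ω hω
      have h1 : (X ω m₀ - μ m₀) ^ 2 = 0 := hω
      have h2 := pow_eq_zero_iff (n := 2) (by norm_num) |>.mp h1
      linarith [sub_eq_zero.mp h2]
    refine htp m₀ ⟨fun _ => μ m₀, fun _ => μ m₀, measurable_const, measurable_const,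
      fun _ _ _ => rfl, fun _ _ _ => rfl, ?_⟩
    refine prob_eq_one_of_ae P ?_
    filter_upwards [hae] with ω hω
    exact Or.inl hω
  -- Y is not a.s. constant
  have hne : ¬ (∀ᵐ ω ∂P, Y ω = ∫ ω', Y ω' ∂P) := by
    intro hae
    set c : ℝ := ∫ ω', Y ω' ∂P with hcdef
    set u : Fin d → ℝ := fun s => A (Sum.inl s) with hu
    set α : ℝ := (μ ⬝ᵥ μ)⁻¹ with hαdef
    set R : (Fin d → ℝ) → ℝ := fun x =>
      ∑ s, u s * (Function.update x m₀ 0 s)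
        + α * ∑ a, (Function.update x m₀ 0 a) ^ 2 with hR
    have hdecomp : ∀ x : Fin d → ℝ,
        ∑ i, A i * Vf x i = α * (x m₀) ^ 2 + u m₀ * x m₀ + R x := by
      intro x
      rw [Avv_dot μ SigM x, ← hA, ← hαdef]
      exact sum_decomp m₀ u α x
    have hYfmeas : Measurable (fun x : Fin d → ℝ =>
        ∑ s, u s * x s + α * ∑ a, x a ^ 2) := by
      apply Measurable.add
      · exact Finset.measurable_sum _ fun s _ => (measurable_pi_apply s).const_mul _
      · exact (Finset.measurable_sum _ fun a _ => (measurable_pi_apply a).pow_const 2).const_mul _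
    have hRmeas : Measurable R := hYfmeas.comp (measurable_updZero m₀)
    set f : (Fin d → ℝ) → ℝ := fun x =>
      (-(u m₀) + Real.sqrt ((u m₀) ^ 2 - 4 * α * (R x - c))) / (2 * α) with hf
    set g : (Fin d → ℝ) → ℝ := fun x =>
      (-(u m₀) - Real.sqrt ((u m₀) ^ 2 - 4 * α * (R x - c))) / (2 * α) with hg
    have hinner : Measurable (fun x : Fin d → ℝ => (u m₀) ^ 2 - 4 * α * (R x - c)) :=
      measurable_const.sub ((hRmeas.sub measurable_const).const_mul _)
    have hfmeas : Measurable f :=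
      (measurable_const.add hinner.sqrt).div_const _
    have hgmeas : Measurable g :=
      (measurable_const.sub hinner.sqrt).div_const _
    have hRinv : ∀ x y : Fin d → ℝ, (∀ s, s ≠ m₀ → x s = y s) → R x = R y := by
      intro x y hxy
      have hupd : Function.update x m₀ 0 = Function.update y m₀ 0 := by
        funext j
        by_cases hj : j = m₀
        · subst hj; simp
        · simp only [Function.update_of_ne hj]; exact hxy j hj
      rw [hR]; simp only [hupd]
    refine htp m₀ ⟨f, g, hfmeas, hgmeas,
      fun x y hxy => by rw [hf]; simp only [hRinv x y hxy],
      fun x y hxy => by rw [hg]; simp only [hRinv x y hxy], ?_⟩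
    refine prob_eq_one_of_ae P ?_
    filter_upwards [hae] with ω hω
    have heq : α * (X ω m₀) ^ 2 + u m₀ * X ω m₀ + R (X ω) = c := by
      rw [← hdecomp (X ω)]
      exact hω
    have := quad_root α (u m₀) (R (X ω)) c (X ω m₀) (hαdef ▸ hα) heq
    exact this
  -- variance is positive
  have hvar : 0 < (∫ ω, Y ω ^ 2 ∂P) - (∫ ω, Y ω ∂P) ^ 2 :=
    var_pos_of_not_ae_const P Y hYint hY2int hne
  -- final assembly
  have hCVV : (CVVof μ SigM) ^ 2 = SigM.trace / (μ ⬝ᵥ μ) := by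
    rw [CVVof, Real.sq_sqrt (div_nonneg htr.le hμμ.le)]
  rw [sigma2VV, hCVV]
  have hQpos : 0 < Avv μ SigM ⬝ᵥ (Matrix.fromBlocks SigM Ψ3ᵀ Ψ3 Ψ4).mulVec (Avv μ SigM) := by
    rw [← hA, hQ]; exact hvar
  have hfac : (0:ℝ) < (1 / 4) * (SigM.trace / (μ ⬝ᵥ μ))⁻¹ := by
    have := div_pos htr hμμ
    positivity
  exact mul_pos hfac hQpos


end
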